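/- Let d ≥ 1 be an integer, α ∈ (0,2), β ∈ (0,1), and suppose 0 < η ≤ α/(βd). Let G be a measurable kernel satisfying the lower heat-kernel bound, let V₀ : ℝ^d → [0,∞) be measurable and not almost everywhere zero, and let V : (0,∞) × ℝ^d → [0,∞] be a mild solution with initial data V₀. Then there exist C > 0 and T₁ > 0 such that for every T ≥ T₁, every t ∈ (0, T/3) and every x ∈ ℝ^d with |x| ≤ T^{β/α}, ∫₀^T ∫_{ℝ^d} V(s,y)^{1+η} G(T+t−s, x−y) dy ds ≥ C·T. -/

import Mathlib

open MeasureTheory ENNReal Metric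

namespace NLTLB

/-- Key pointwise estimate on the heat-kernel lower bound expression. -/
lemma keyG (d : ℕ) (α β : ℝ) (hα : 0 < α) (hβ : 0 < β)
    (θ t' w : ℝ) (hθ : 0 < θ) (h1 : θ / 2 ≤ t') (h2 : t' ≤ θ)
    (hw : 0 < w) (hw2 : w ≤ 2 * θ ^ (β / α)) :
    (2:ℝ) ^ (-(β + d + α)) * θ ^ (-(β * d) / α)
      ≤ min (t' ^ (-(β * d) / α)) (t' ^ β / w ^ ((d : ℝ) + α)) := by
  have ht' : 0 < t' := lt_of_lt_of_le (by linarith) h1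
  have hdnn : (0:ℝ) ≤ d := Nat.cast_nonneg d
  have h2le1 : (2:ℝ) ^ (-(β + d + α)) ≤ 1 :=
    Real.rpow_le_one_of_one_le_of_nonpos (by norm_num) (by linarith)
  have h2pos : (0:ℝ) < (2:ℝ) ^ (-(β + d + α)) := Real.rpow_pos_of_pos (by norm_num) _
  refine le_min ?_ ?_
  · have hmono : θ ^ (-(β * d) / α) ≤ t' ^ (-(β * d) / α) := by
      rw [neg_div, Real.rpow_neg hθ.le, Real.rpow_neg ht'.le]
      have hle : t' ^ (β * d / α) ≤ θ ^ (β * d / α) :=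
        Real.rpow_le_rpow ht'.le h2 (by positivity)
      exact inv_anti₀ (Real.rpow_pos_of_pos ht' _) hle
    calc (2:ℝ) ^ (-(β + d + α)) * θ ^ (-(β * d) / α)
        ≤ 1 * θ ^ (-(β * d) / α) :=
          mul_le_mul_of_nonneg_right h2le1 (Real.rpow_pos_of_pos hθ _).le
      _ = θ ^ (-(β * d) / α) := one_mul _
      _ ≤ t' ^ (-(β * d) / α) := hmono
  · rw [le_div_iff₀ (Real.rpow_pos_of_pos hw _)]
    have hwle : w ^ ((d:ℝ) + α) ≤ (2 * θ ^ (β / α)) ^ ((d:ℝ) + α) :=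
      Real.rpow_le_rpow hw.le hw2 (by linarith)
    have key : (2:ℝ) ^ (-(β + d + α)) * θ ^ (-(β * d) / α) * (2 * θ ^ (β / α)) ^ ((d:ℝ) + α)
        = (θ / 2) ^ β := by
      have e1 : (β / α) * ((d:ℝ) + α) = β * d / α + β := by field_simp
      have e2 : ((2:ℝ) * θ ^ (β / α)) ^ ((d:ℝ) + α)
          = 2 ^ ((d:ℝ) + α) * (θ ^ (β * d / α) * θ ^ β) := by
        rw [Real.mul_rpow (by norm_num) (Real.rpow_nonneg hθ.le _), ← Real.rpow_mul hθ.le,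
          e1, Real.rpow_add hθ]
      have e3 : (2:ℝ) ^ (-(β + (d:ℝ) + α)) = ((2:ℝ) ^ β * 2 ^ ((d:ℝ) + α))⁻¹ := by
        rw [← Real.rpow_add (by norm_num : (0:ℝ) < 2)]
        rw [show β + ((d:ℝ) + α) = β + (d:ℝ) + α by ring]
        rw [Real.rpow_neg (by norm_num : (0:ℝ) ≤ 2)]
      have e4 : θ ^ (-(β * (d:ℝ)) / α) = (θ ^ (β * d / α))⁻¹ := by
        rw [neg_div, Real.rpow_neg hθ.le]
      have e5 : (θ / 2) ^ β = θ ^ β / 2 ^ β := Real.div_rpow hθ.le (by norm_num : (0:ℝ) ≤ 2) β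
      rw [e2, e3, e4, e5]
      have n1 : (2:ℝ) ^ β ≠ 0 := (Real.rpow_pos_of_pos (by norm_num) _).ne'
      have n2 : (2:ℝ) ^ ((d:ℝ) + α) ≠ 0 := (Real.rpow_pos_of_pos (by norm_num) _).ne'
      have n3 : θ ^ (β * (d:ℝ) / α) ≠ 0 := (Real.rpow_pos_of_pos hθ _).ne'
      field_simp
    calc (2:ℝ) ^ (-(β + d + α)) * θ ^ (-(β * d) / α) * w ^ ((d:ℝ) + α)
        ≤ (2:ℝ) ^ (-(β + d + α)) * θ ^ (-(β * d) / α) * (2 * θ ^ (β / α)) ^ ((d:ℝ) + α) := by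
          have : (0:ℝ) ≤ (2:ℝ) ^ (-(β + d + α)) * θ ^ (-(β * d) / α) := by positivity
          exact mul_le_mul_of_nonneg_left hwle this
      _ = (θ / 2) ^ β := key
      _ ≤ t' ^ β := Real.rpow_le_rpow (by linarith) h1 hβ.le

lemma log_le_lintegral_inv (u v : ℝ) (hu : 0 < u) (huv : u ≤ v) :
    ENNReal.ofReal (Real.log (v / u)) ≤ ∫⁻ s in Set.Ioo u v, ENNReal.ofReal s⁻¹ := by
  have hv : 0 < v := hu.trans_le huv
  have hint : IntegrableOn (fun s : ℝ => s⁻¹) (Set.Ioo u v) := by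
    apply (ContinuousOn.integrableOn_Icc ?_).mono_set Set.Ioo_subset_Icc_self
    exact ContinuousOn.inv₀ (continuousOn_id) (fun x hx => (hu.trans_le hx.1).ne')
  have hnn : 0 ≤ᵐ[volume.restrict (Set.Ioo u v)] (fun s : ℝ => s⁻¹) := by
    refine (ae_restrict_iff' measurableSet_Ioo).2 (Filter.Eventually.of_forall ?_)
    intro s hs
    exact inv_nonneg.2 (hu.trans hs.1).le
  rw [← ofReal_integral_eq_lintegral_ofReal hint hnn]
  apply ENNReal.ofReal_le_ofReal
  rw [← integral_Ioc_eq_integral_Ioo, ← intervalIntegral.integral_of_le huv,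
    integral_inv_of_pos hu hv]

def Hyp (d : ℕ) (α β : ℝ) (V : ℝ → EuclideanSpace ℝ (Fin d) → ℝ≥0∞) (γ S : ℝ) : Prop :=
  ∀ s : ℝ, S ≤ s → ∀ y : EuclideanSpace ℝ (Fin d), ‖y‖ ≤ s ^ (β / α) →
    ENNReal.ofReal (γ * s ^ (-(β * (d:ℝ)) / α)) ≤ V s y

lemma hyp_mono {d : ℕ} {α β : ℝ} {V : ℝ → EuclideanSpace ℝ (Fin d) → ℝ≥0∞} {γ γ' S : ℝ}
    (hS : 1 ≤ S) (hle : γ ≤ γ') (h : Hyp d α β V γ' S) : Hyp d α β V γ S := by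
  intro s hs y hy
  refine le_trans (ENNReal.ofReal_le_ofReal ?_) (h s hs y hy)
  have hs0 : (0:ℝ) ≤ s := by linarith
  exact mul_le_mul_of_nonneg_right hle (Real.rpow_nonneg hs0 _)

/-- The core estimate: a pointwise parabolic lower bound on `V` gives a lower bound
on the nonlinear Duhamel-type integral. -/
lemma coreEst (d : ℕ) (hd : 1 ≤ d) (α β η : ℝ)
    (hα : α ∈ Set.Ioo (0 : ℝ) 2) (hβ : β ∈ Set.Ioo (0 : ℝ) 1)
    (hη : 0 < η) (hηc : η ≤ α / (β * d))
    (G : ℝ → EuclideanSpace ℝ (Fin d) → ℝ)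
    (c₁ : ℝ) (hc₁ : 0 < c₁)
    (hGlower : ∀ t : ℝ, 0 < t → ∀ x : EuclideanSpace ℝ (Fin d),
      c₁ * min (t ^ (-(β * d) / α)) (t ^ β / ‖x‖ ^ ((d : ℝ) + α)) ≤ G t x)
    (V : ℝ → EuclideanSpace ℝ (Fin d) → ℝ≥0∞)
    (γ S : ℝ) (hγ : 0 < γ) (hS : 1 ≤ S) (hyp : Hyp d α β V γ S)
    (τ u v : ℝ) (hu : S ≤ u) (huv : u < v) (hv : v ≤ τ / 2)
    (x : EuclideanSpace ℝ (Fin d)) (hx : ‖x‖ ≤ τ ^ (β / α)) :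
    ENNReal.ofReal ((c₁ * 2 ^ (-(β + d + α))
          * (volume (ball (0 : EuclideanSpace ℝ (Fin d)) 1)).toReal)
        * γ ^ (1 + η) * τ ^ (-(β * (d:ℝ)) / α) * Real.log (v / u))
      ≤ ∫⁻ s in Set.Ioo u v, ∫⁻ y, (V s y) ^ (1 + η)
          * ENNReal.ofReal (G (τ - s) (x - y)) := by
  haveI : Nontrivial (EuclideanSpace ℝ (Fin d)) :=
    ⟨0, EuclideanSpace.single ⟨0, hd⟩ 1, by
      intro h; have := congrArg (fun v : EuclideanSpace ℝ (Fin d) => v ⟨0, hd⟩) h; simp [EuclideanSpace.single] at this⟩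
  obtain ⟨hα0, hα2⟩ := hα
  obtain ⟨hβ0, hβ1⟩ := hβ
  have hd0 : (0:ℝ) < d := by exact_mod_cast hd
  have hu0 : (0:ℝ) < u := lt_of_lt_of_le one_pos hS |>.trans_le hu
  have hτ : 0 < τ := by linarith
  set ω : ℝ≥0∞ := volume (ball (0 : EuclideanSpace ℝ (Fin d)) 1) with hω
  have hωpos : 0 < ω := measure_ball_pos _ _ one_pos
  have hωfin : ω ≠ ⊤ := measure_ball_lt_top.ne
  set c₂ : ℝ := c₁ * 2 ^ (-(β + d + α)) with hc₂def
  have hc₂ : 0 < c₂ := by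
    have := Real.rpow_pos_of_pos (show (0:ℝ) < 2 by norm_num) (-(β + d + α))
    positivity
  set Cγ : ℝ := c₂ * γ ^ (1 + η) * τ ^ (-(β * (d:ℝ)) / α) with hCγdef
  have hCγ : 0 < Cγ := by
    have h1 := Real.rpow_pos_of_pos hγ (1 + η)
    have h2 := Real.rpow_pos_of_pos hτ (-(β * (d:ℝ)) / α)
    positivity
  have hpη : β * (d:ℝ) / α * η ≤ 1 := by
    rw [div_mul_eq_mul_div, div_le_one hα0]
    calc β * (d:ℝ) * η ≤ β * (d:ℝ) * (α / (β * d)) := by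
          apply mul_le_mul_of_nonneg_left hηc (by positivity)
      _ = α := by field_simp
  -- pointwise-in-s claim
  have claim : ∀ s ∈ Set.Ioo u v,
      ENNReal.ofReal (Cγ * ω.toReal) * ENNReal.ofReal s⁻¹
        ≤ ∫⁻ y, (V s y) ^ (1 + η) * ENNReal.ofReal (G (τ - s) (x - y)) := by
    intro s hs
    have hSs : S ≤ s := hu.trans hs.1.le
    have hs1 : (1:ℝ) ≤ s := hS.trans hSs
    have hspos : (0:ℝ) < s := by linarith
    have hsv : s < v := hs.2
    have hsτ : s ≤ τ := by linarith
    have hτs : 0 < τ - s := by linarith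
    set R : ℝ := s ^ (β / α) with hRdef
    have hR : 0 < R := Real.rpow_pos_of_pos hspos _
    set A : Set (EuclideanSpace ℝ (Fin d)) :=
      ball (0 : EuclideanSpace ℝ (Fin d)) R \ {x} with hAdef
    have hAmeas : MeasurableSet A := measurableSet_ball.diff (measurableSet_singleton x)
    set cY : ℝ := c₂ * τ ^ (-(β * (d:ℝ)) / α) * (γ * s ^ (-(β * (d:ℝ)) / α)) ^ (1 + η)
      with hcYdef
    have hsP : 0 < γ * s ^ (-(β * (d:ℝ)) / α) := by
      have := Real.rpow_pos_of_pos hspos (-(β * (d:ℝ)) / α); positivity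
    have hcY : 0 < cY := by
      have h2 := Real.rpow_pos_of_pos hτ (-(β * (d:ℝ)) / α)
      have h3 := Real.rpow_pos_of_pos hsP (1 + η)
      positivity
    -- pointwise-in-y bound
    have hpt : ∀ y, A.indicator (fun _ => ENNReal.ofReal cY) y
        ≤ (V s y) ^ (1 + η) * ENNReal.ofReal (G (τ - s) (x - y)) := by
      intro y
      by_cases hyA : y ∈ A
      · rw [Set.indicator_of_mem hyA]
        obtain ⟨hyball, hyx⟩ := hyA
        have hyn : ‖y‖ ≤ R := (mem_ball_zero_iff.1 hyball).le
        have hVy : ENNReal.ofReal (γ * s ^ (-(β * (d:ℝ)) / α)) ≤ V s y := hyp s hSs y hyn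
        have hxy : x - y ≠ 0 := sub_ne_zero.2 fun h => hyx (by simp [h.symm])
        have hxyn : 0 < ‖x - y‖ := norm_pos_iff.2 hxy
        have hw2 : ‖x - y‖ ≤ 2 * τ ^ (β / α) := by
          have h1 : ‖x - y‖ ≤ ‖x‖ + ‖y‖ := norm_sub_le x y
          have h2 : s ^ (β / α) ≤ τ ^ (β / α) :=
            Real.rpow_le_rpow hspos.le hsτ (by positivity)
          have := hyn.trans h2
          rw [hRdef] at hyn
          linarith [hyn.trans h2]
        have hGy : c₂ * τ ^ (-(β * (d:ℝ)) / α) ≤ G (τ - s) (x - y) := by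
          have hk := keyG d α β hα0 hβ0 τ (τ - s) ‖x - y‖ hτ (by linarith) (by linarith)
            hxyn hw2
          calc c₂ * τ ^ (-(β * (d:ℝ)) / α)
              = c₁ * (2 ^ (-(β + d + α)) * τ ^ (-(β * (d:ℝ)) / α)) := by
                rw [hc₂def]; ring
            _ ≤ c₁ * min ((τ - s) ^ (-(β * d) / α))
                  ((τ - s) ^ β / ‖x - y‖ ^ ((d:ℝ) + α)) :=
                mul_le_mul_of_nonneg_left hk hc₁.le
            _ ≤ G (τ - s) (x - y) := hGlower (τ - s) hτs (x - y)
        calc ENNReal.ofReal cY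
            = ENNReal.ofReal (γ * s ^ (-(β * (d:ℝ)) / α)) ^ (1 + η)
              * ENNReal.ofReal (c₂ * τ ^ (-(β * (d:ℝ)) / α)) := by
              rw [ENNReal.ofReal_rpow_of_nonneg hsP.le (by linarith),
                ← ENNReal.ofReal_mul (by positivity), hcYdef]; ring_nf
          _ ≤ (V s y) ^ (1 + η) * ENNReal.ofReal (G (τ - s) (x - y)) :=
              mul_le_mul' (ENNReal.rpow_le_rpow hVy (by linarith)) (ENNReal.ofReal_le_ofReal hGy)
      · rw [Set.indicator_of_notMem hyA]; exact zero_le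
    -- integrate in y
    have hAvol : volume A = ENNReal.ofReal (R ^ d) * ω := by
      rw [hAdef, measure_diff_null (measure_singleton x), Measure.addHaar_ball volume _ hR.le,
        finrank_euclideanSpace_fin]
    have hRd : (R : ℝ) ^ (d : ℕ) = s ^ (β * (d:ℝ) / α) := by
      rw [hRdef, ← Real.rpow_natCast (s ^ (β / α)) d, ← Real.rpow_mul hspos.le]
      congr 1; ring
    -- the real inequality
    have hreal : Cγ * ω.toReal * s⁻¹ ≤ cY * R ^ d * ω.toReal := by
      have key : cY * R ^ d = Cγ * s ^ (-(β * (d:ℝ) / α * η)) := by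
        have e1 : (γ * s ^ (-(β * (d:ℝ)) / α)) ^ (1 + η)
            = γ ^ (1 + η) * s ^ (-(β * (d:ℝ)) / α * (1 + η)) := by
          rw [Real.mul_rpow hγ.le (Real.rpow_nonneg hspos.le _), ← Real.rpow_mul hspos.le]
        have e2 : s ^ (-(β * (d:ℝ)) / α * (1 + η)) * s ^ (β * (d:ℝ) / α)
            = s ^ (-(β * (d:ℝ) / α * η)) := by
          rw [← Real.rpow_add hspos]; congr 1; ring
        calc cY * R ^ d
            = c₂ * τ ^ (-(β * (d:ℝ)) / α) * γ ^ (1 + η)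
              * (s ^ (-(β * (d:ℝ)) / α * (1 + η)) * s ^ (β * (d:ℝ) / α)) := by
              rw [hcYdef, e1, hRd]; ring
          _ = Cγ * s ^ (-(β * (d:ℝ) / α * η)) := by rw [e2, hCγdef]; ring
      have hsle : s⁻¹ ≤ s ^ (-(β * (d:ℝ) / α * η)) := by
        rw [← Real.rpow_neg_one s]
        exact Real.rpow_le_rpow_of_exponent_le hs1 (by linarith)
      calc Cγ * ω.toReal * s⁻¹ = Cγ * s⁻¹ * ω.toReal := by ring
        _ ≤ Cγ * s ^ (-(β * (d:ℝ) / α * η)) * ω.toReal := by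
            apply mul_le_mul_of_nonneg_right _ ENNReal.toReal_nonneg
            exact mul_le_mul_of_nonneg_left hsle hCγ.le
        _ = cY * R ^ d * ω.toReal := by rw [key]
    calc ENNReal.ofReal (Cγ * ω.toReal) * ENNReal.ofReal s⁻¹
        = ENNReal.ofReal (Cγ * ω.toReal * s⁻¹) := by
          rw [← ENNReal.ofReal_mul (by positivity)]
      _ ≤ ENNReal.ofReal (cY * R ^ d * ω.toReal) := ENNReal.ofReal_le_ofReal hreal
      _ = ENNReal.ofReal cY * (ENNReal.ofReal (R ^ d) * ENNReal.ofReal ω.toReal) := by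
          rw [← ENNReal.ofReal_mul (by positivity), ← ENNReal.ofReal_mul (by positivity)]
          ring_nf
      _ = ENNReal.ofReal cY * volume A := by
          rw [ENNReal.ofReal_toReal hωfin, hAvol]
      _ = ∫⁻ y, A.indicator (fun _ => ENNReal.ofReal cY) y := by
          rw [lintegral_indicator_const hAmeas]
      _ ≤ ∫⁻ y, (V s y) ^ (1 + η) * ENNReal.ofReal (G (τ - s) (x - y)) :=
          lintegral_mono hpt
  -- integrate in s
  have lhs_eq : (c₁ * 2 ^ (-(β + d + α)) * ω.toReal) * γ ^ (1 + η)
      * τ ^ (-(β * (d:ℝ)) / α) * Real.log (v / u) = (Cγ * ω.toReal) * Real.log (v / u) := by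
    rw [hCγdef, hc₂def]; ring
  rw [lhs_eq]
  calc ENNReal.ofReal ((Cγ * ω.toReal) * Real.log (v / u))
      = ENNReal.ofReal (Cγ * ω.toReal) * ENNReal.ofReal (Real.log (v / u)) :=
        ENNReal.ofReal_mul (by positivity)
    _ ≤ ENNReal.ofReal (Cγ * ω.toReal) * ∫⁻ s in Set.Ioo u v, ENNReal.ofReal s⁻¹ :=
        mul_le_mul' le_rfl (log_le_lintegral_inv u v hu0 huv.le)
    _ = ∫⁻ s in Set.Ioo u v, ENNReal.ofReal (Cγ * ω.toReal) * ENNReal.ofReal s⁻¹ :=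
        (lintegral_const_mul' _ _ ENNReal.ofReal_ne_top).symm
    _ ≤ ∫⁻ s in Set.Ioo u v, ∫⁻ y, (V s y) ^ (1 + η)
          * ENNReal.ofReal (G (τ - s) (x - y)) := by
        apply lintegral_mono_ae
        exact (ae_restrict_iff' measurableSet_Ioo).2 (Filter.Eventually.of_forall claim)

/-- Base lower bound coming from the non-trivial initial data. -/
lemma base (d : ℕ) (hd : 1 ≤ d) (α β η : ℝ)
    (hα : α ∈ Set.Ioo (0 : ℝ) 2) (hβ : β ∈ Set.Ioo (0 : ℝ) 1)
    (hη : 0 < η)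
    (G : ℝ → EuclideanSpace ℝ (Fin d) → ℝ)
    (c₁ : ℝ) (hc₁ : 0 < c₁)
    (hGlower : ∀ t : ℝ, 0 < t → ∀ x : EuclideanSpace ℝ (Fin d),
      c₁ * min (t ^ (-(β * d) / α)) (t ^ β / ‖x‖ ^ ((d : ℝ) + α)) ≤ G t x)
    (V₀ : EuclideanSpace ℝ (Fin d) → ℝ)
    (hV₀meas : Measurable V₀) (hV₀nonneg : ∀ x, 0 ≤ V₀ x)
    (hV₀ne : ¬ (V₀ =ᵐ[volume] 0))
    (V : ℝ → EuclideanSpace ℝ (Fin d) → ℝ≥0∞)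
    (hmild : ∀ t : ℝ, 0 < t → ∀ x : EuclideanSpace ℝ (Fin d),
      V t x
        = (∫⁻ y, ENNReal.ofReal (G t (x - y)) * ENNReal.ofReal (V₀ y))
          + ∫⁻ s in Set.Ioo (0 : ℝ) t,
              ∫⁻ y, ENNReal.ofReal (G (t - s) (x - y)) * (V s y) ^ (1 + η)) :
    ∃ c₀ : ℝ, 0 < c₀ ∧ ∃ S₀ : ℝ, 1 ≤ S₀ ∧ Hyp d α β V c₀ S₀ := by
  haveI : Nontrivial (EuclideanSpace ℝ (Fin d)) :=
    ⟨0, EuclideanSpace.single ⟨0, hd⟩ 1, by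
      intro h; have := congrArg (fun v : EuclideanSpace ℝ (Fin d) => v ⟨0, hd⟩) h; simp [EuclideanSpace.single] at this⟩
  obtain ⟨hα0, hα2⟩ := hα
  obtain ⟨hβ0, hβ1⟩ := hβ
  -- find a bounded set of positive measure on which V₀ is bounded below
  have hex : ∃ n : ℕ, 0 < volume (ball (0 : EuclideanSpace ℝ (Fin d)) ((n:ℝ)+1)
      ∩ {z | 1/((n:ℝ)+1) ≤ V₀ z}) := by
    by_contra hcon
    push_neg at hcon
    apply hV₀ne
    have hnull : volume (⋃ n : ℕ, ball (0 : EuclideanSpace ℝ (Fin d)) ((n:ℝ)+1)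
        ∩ {z | 1/((n:ℝ)+1) ≤ V₀ z}) = 0 :=
      measure_iUnion_null fun n => le_antisymm (hcon n) zero_le
    rw [Filter.EventuallyEq, ae_iff]
    refine measure_mono_null ?_ hnull
    intro z hz
    simp only [Set.mem_setOf_eq, Pi.zero_apply] at hz
    have hz' : 0 < V₀ z := lt_of_le_of_ne (hV₀nonneg z) (Ne.symm hz)
    obtain ⟨n, hn⟩ := exists_nat_gt (max ‖z‖ (1 / V₀ z))
    refine Set.mem_iUnion.2 ⟨n, ⟨mem_ball_zero_iff.2 ?_, ?_⟩⟩
    · have := le_max_left ‖z‖ (1 / V₀ z)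
      linarith [this.trans_lt hn]
    · have h1 : 1 / V₀ z < (n:ℝ) := (le_max_right _ _).trans_lt hn
      have h2 : 1 < V₀ z * (n:ℝ) := by
        rw [div_lt_iff₀ hz'] at h1; linarith
      simp only [Set.mem_setOf_eq]
      rw [div_le_iff₀ (by positivity)]
      nlinarith [hV₀nonneg z]
  obtain ⟨n, hA⟩ := hex
  set R : ℝ := (n:ℝ) + 1 with hRdef
  have hR1 : (1:ℝ) ≤ R := by
    rw [hRdef]; have : (0:ℝ) ≤ n := Nat.cast_nonneg n; linarith
  set ε : ℝ := 1/((n:ℝ)+1) with hεdef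
  have hε : 0 < ε := by positivity
  set Aset : Set (EuclideanSpace ℝ (Fin d)) :=
    ball (0 : EuclideanSpace ℝ (Fin d)) R ∩ {z | ε ≤ V₀ z} with hAdef
  have hAmeas : MeasurableSet Aset :=
    measurableSet_ball.inter (hV₀meas measurableSet_Ici)
  have hAfin : volume Aset ≠ ⊤ :=
    ne_top_of_le_ne_top measure_ball_lt_top.ne (measure_mono Set.inter_subset_left)
  set m : ℝ := (volume Aset).toReal with hmdef
  have hm : 0 < m := ENNReal.toReal_pos hA.ne' hAfin
  set c₂ : ℝ := c₁ * 2 ^ (-(β + d + α)) with hc₂def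
  have hc₂ : 0 < c₂ := by
    have := Real.rpow_pos_of_pos (show (0:ℝ) < 2 by norm_num) (-(β + d + α))
    positivity
  refine ⟨c₂ * ε * m, by positivity, max 1 (R ^ (α/β)), le_max_left _ _, ?_⟩
  intro s hs y hy
  have hs1 : (1:ℝ) ≤ s := (le_max_left _ _).trans hs
  have hspos : (0:ℝ) < s := by linarith
  have hsr : R ≤ s ^ (β / α) := by
    have h1 : R = (R ^ (α/β)) ^ (β/α) := by
      rw [← Real.rpow_mul (by linarith : (0:ℝ) ≤ R)]
      rw [show (α/β) * (β/α) = 1 by field_simp]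
      exact (Real.rpow_one R).symm
    rw [h1]
    exact Real.rpow_le_rpow (by positivity) ((le_max_right _ _).trans hs) (by positivity)
  rw [hmild s hspos y]
  refine le_trans ?_ le_self_add
  -- bound the linear term from below
  set A' : Set (EuclideanSpace ℝ (Fin d)) := Aset \ {y} with hA'def
  have hA'meas : MeasurableSet A' := hAmeas.diff (measurableSet_singleton y)
  have hpt : ∀ z, A'.indicator (fun _ => ENNReal.ofReal (c₂ * s ^ (-(β * (d:ℝ)) / α) * ε)) z
      ≤ ENNReal.ofReal (G s (y - z)) * ENNReal.ofReal (V₀ z) := by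
    intro z
    by_cases hz : z ∈ A'
    · rw [Set.indicator_of_mem hz]
      obtain ⟨⟨hzball, hzε⟩, hzy⟩ := hz
      have hzn : ‖z‖ < R := mem_ball_zero_iff.1 hzball
      have hyz : y - z ≠ 0 := sub_ne_zero.2 fun h => hzy (by simp [h.symm])
      have hyzn : 0 < ‖y - z‖ := norm_pos_iff.2 hyz
      have hw2 : ‖y - z‖ ≤ 2 * s ^ (β / α) := by
        have h1 : ‖y - z‖ ≤ ‖y‖ + ‖z‖ := norm_sub_le y z
        linarith
      have hGz : c₂ * s ^ (-(β * (d:ℝ)) / α) ≤ G s (y - z) := by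
        have hk := keyG d α β hα0 hβ0 s s ‖y - z‖ hspos (by linarith) le_rfl hyzn hw2
        calc c₂ * s ^ (-(β * (d:ℝ)) / α)
            = c₁ * (2 ^ (-(β + d + α)) * s ^ (-(β * (d:ℝ)) / α)) := by
              rw [hc₂def]; ring
          _ ≤ c₁ * min (s ^ (-(β * d) / α)) (s ^ β / ‖y - z‖ ^ ((d:ℝ) + α)) :=
              mul_le_mul_of_nonneg_left hk hc₁.le
          _ ≤ G s (y - z) := hGlower s hspos (y - z)
      calc ENNReal.ofReal (c₂ * s ^ (-(β * (d:ℝ)) / α) * ε)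
          = ENNReal.ofReal (c₂ * s ^ (-(β * (d:ℝ)) / α)) * ENNReal.ofReal ε := by
            rw [← ENNReal.ofReal_mul]
            have := Real.rpow_pos_of_pos hspos (-(β * (d:ℝ)) / α); positivity
        _ ≤ ENNReal.ofReal (G s (y - z)) * ENNReal.ofReal (V₀ z) :=
            mul_le_mul' (ENNReal.ofReal_le_ofReal hGz) (ENNReal.ofReal_le_ofReal hzε)
    · rw [Set.indicator_of_notMem hz]; exact zero_le
  have hvol : volume A' = volume Aset := measure_diff_null (measure_singleton y)
  have hsp := Real.rpow_pos_of_pos hspos (-(β * (d:ℝ)) / α)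
  calc ENNReal.ofReal (c₂ * ε * m * s ^ (-(β * (d:ℝ)) / α))
      = ENNReal.ofReal (c₂ * s ^ (-(β * (d:ℝ)) / α) * ε) * ENNReal.ofReal m := by
        rw [← ENNReal.ofReal_mul (by positivity)]; ring_nf
    _ = ENNReal.ofReal (c₂ * s ^ (-(β * (d:ℝ)) / α) * ε) * volume A' := by
        rw [hmdef, ENNReal.ofReal_toReal hAfin, hvol]
    _ = ∫⁻ z, A'.indicator (fun _ => ENNReal.ofReal (c₂ * s ^ (-(β * (d:ℝ)) / α) * ε)) z := by
        rw [lintegral_indicator_const hA'meas]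
    _ ≤ ∫⁻ z, ENNReal.ofReal (G s (y - z)) * ENNReal.ofReal (V₀ z) := lintegral_mono hpt

/-- One iteration step: improve the constant in the parabolic lower bound. -/
lemma step (d : ℕ) (hd : 1 ≤ d) (α β η : ℝ)
    (hα : α ∈ Set.Ioo (0 : ℝ) 2) (hβ : β ∈ Set.Ioo (0 : ℝ) 1)
    (hη : 0 < η) (hηc : η ≤ α / (β * d))
    (G : ℝ → EuclideanSpace ℝ (Fin d) → ℝ)
    (c₁ : ℝ) (hc₁ : 0 < c₁)
    (hGlower : ∀ t : ℝ, 0 < t → ∀ x : EuclideanSpace ℝ (Fin d),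
      c₁ * min (t ^ (-(β * d) / α)) (t ^ β / ‖x‖ ^ ((d : ℝ) + α)) ≤ G t x)
    (V₀ : EuclideanSpace ℝ (Fin d) → ℝ)
    (V : ℝ → EuclideanSpace ℝ (Fin d) → ℝ≥0∞)
    (hmild : ∀ t : ℝ, 0 < t → ∀ x : EuclideanSpace ℝ (Fin d),
      V t x
        = (∫⁻ y, ENNReal.ofReal (G t (x - y)) * ENNReal.ofReal (V₀ y))
          + ∫⁻ s in Set.Ioo (0 : ℝ) t,
              ∫⁻ y, ENNReal.ofReal (G (t - s) (x - y)) * (V s y) ^ (1 + η))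
    (γ S : ℝ) (hγ : 0 < γ) (hS : 1 ≤ S) (hyp : Hyp d α β V γ S) :
    Hyp d α β V ((c₁ * 2 ^ (-(β + d + α))
        * (volume (ball (0 : EuclideanSpace ℝ (Fin d)) 1)).toReal)
      * Real.log 2 * γ ^ (1 + η)) (4 * S) := by
  intro t ht x hx
  have ht0 : (0:ℝ) < t := by linarith
  set K : ℝ := c₁ * 2 ^ (-(β + d + α))
      * (volume (ball (0 : EuclideanSpace ℝ (Fin d)) 1)).toReal with hKdef
  rw [hmild t ht0 x]
  refine le_trans ?_ le_add_self
  have hcomm : (∫⁻ s in Set.Ioo (0 : ℝ) t,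
        ∫⁻ y, ENNReal.ofReal (G (t - s) (x - y)) * (V s y) ^ (1 + η))
      = ∫⁻ s in Set.Ioo (0 : ℝ) t,
        ∫⁻ y, (V s y) ^ (1 + η) * ENNReal.ofReal (G (t - s) (x - y)) := by
    refine lintegral_congr fun s => lintegral_congr fun y => mul_comm _ _
  rw [hcomm]
  have hsub : (volume : Measure ℝ).restrict (Set.Ioo S (t/2))
      ≤ (volume : Measure ℝ).restrict (Set.Ioo (0 : ℝ) t) := by
    apply Measure.restrict_mono _ le_rfl
    apply Set.Ioo_subset_Ioo <;> linarith
  refine le_trans ?_ (lintegral_mono' hsub le_rfl)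
  have hce := coreEst d hd α β η ⟨hα.1, hα.2⟩ ⟨hβ.1, hβ.2⟩ hη hηc G c₁ hc₁ hGlower V γ S hγ hS
    hyp t S (t/2) le_rfl (by linarith) le_rfl x hx
  refine le_trans (ENNReal.ofReal_le_ofReal ?_) hce
  -- K * log 2 * γ^(1+η) * t^(-p) ≤ K * γ^(1+η) * t^(-p) * log (t/2/S)
  have hlog : Real.log 2 ≤ Real.log (t / 2 / S) := by
    apply Real.log_le_log (by norm_num)
    rw [le_div_iff₀ (by linarith : (0:ℝ) < S)]
    linarith
  have hK0 : 0 ≤ K := by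
    have := Real.rpow_pos_of_pos (show (0:ℝ) < 2 by norm_num) (-(β + d + α))
    have := ENNReal.toReal_nonneg
      (a := volume (ball (0 : EuclideanSpace ℝ (Fin d)) 1))
    rw [hKdef]; positivity
  have hγη : 0 ≤ γ ^ (1 + η) := (Real.rpow_pos_of_pos hγ _).le
  have htp : 0 ≤ t ^ (-(β * (d:ℝ)) / α) := (Real.rpow_pos_of_pos ht0 _).le
  calc K * Real.log 2 * γ ^ (1 + η) * t ^ (-(β * (d:ℝ)) / α)
      = (K * γ ^ (1 + η) * t ^ (-(β * (d:ℝ)) / α)) * Real.log 2 := by ring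
    _ ≤ (K * γ ^ (1 + η) * t ^ (-(β * (d:ℝ)) / α)) * Real.log (t / 2 / S) := by
        apply mul_le_mul_of_nonneg_left hlog (by positivity)
    _ = K * γ ^ (1 + η) * t ^ (-(β * (d:ℝ)) / α) * Real.log (t / 2 / S) := by ring

/-- Kickstart: the lower-bound constant can be made as large as we wish. -/
lemma kick (d : ℕ) (hd : 1 ≤ d) (α β η : ℝ)
    (hα : α ∈ Set.Ioo (0 : ℝ) 2) (hβ : β ∈ Set.Ioo (0 : ℝ) 1)
    (hη : 0 < η) (hηc : η ≤ α / (β * d))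
    (G : ℝ → EuclideanSpace ℝ (Fin d) → ℝ)
    (c₁ : ℝ) (hc₁ : 0 < c₁)
    (hGlower : ∀ t : ℝ, 0 < t → ∀ x : EuclideanSpace ℝ (Fin d),
      c₁ * min (t ^ (-(β * d) / α)) (t ^ β / ‖x‖ ^ ((d : ℝ) + α)) ≤ G t x)
    (V₀ : EuclideanSpace ℝ (Fin d) → ℝ)
    (hV₀meas : Measurable V₀) (hV₀nonneg : ∀ x, 0 ≤ V₀ x)
    (hV₀ne : ¬ (V₀ =ᵐ[volume] 0))
    (V : ℝ → EuclideanSpace ℝ (Fin d) → ℝ≥0∞)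
    (hmild : ∀ t : ℝ, 0 < t → ∀ x : EuclideanSpace ℝ (Fin d),
      V t x
        = (∫⁻ y, ENNReal.ofReal (G t (x - y)) * ENNReal.ofReal (V₀ y))
          + ∫⁻ s in Set.Ioo (0 : ℝ) t,
              ∫⁻ y, ENNReal.ofReal (G (t - s) (x - y)) * (V s y) ^ (1 + η))
    (M : ℝ) (hM : 0 < M) :
    ∃ S : ℝ, 1 ≤ S ∧ Hyp d α β V M S := by
  haveI : Nontrivial (EuclideanSpace ℝ (Fin d)) :=
    ⟨0, EuclideanSpace.single ⟨0, hd⟩ 1, by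
      intro h; have := congrArg (fun v : EuclideanSpace ℝ (Fin d) => v ⟨0, hd⟩) h; simp [EuclideanSpace.single] at this⟩
  obtain ⟨c₀, hc₀, S₀, hS₀, hyp₀⟩ := base d hd α β η hα hβ hη G c₁ hc₁ hGlower V₀ hV₀meas
    hV₀nonneg hV₀ne V hmild
  set K : ℝ := c₁ * 2 ^ (-(β + d + α))
      * (volume (ball (0 : EuclideanSpace ℝ (Fin d)) 1)).toReal with hKdef
  have hK : 0 < K := by
    have h1 := Real.rpow_pos_of_pos (show (0:ℝ) < 2 by norm_num) (-(β + d + α))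
    have h2 : 0 < (volume (ball (0 : EuclideanSpace ℝ (Fin d)) 1)).toReal :=
      ENNReal.toReal_pos (measure_ball_pos _ _ one_pos).ne' measure_ball_lt_top.ne
    rw [hKdef]; positivity
  have hKc : 0 < K * c₀ ^ (1 + η) := by
    have := Real.rpow_pos_of_pos hc₀ (1 + η); positivity
  refine ⟨max (4 * S₀) (2 * S₀ * Real.exp (M / (K * c₀ ^ (1 + η)))), ?_, ?_⟩
  · have := le_max_left (4 * S₀) (2 * S₀ * Real.exp (M / (K * c₀ ^ (1 + η))))
    linarith
  intro t ht x hx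
  have ht4 : 4 * S₀ ≤ t := (le_max_left _ _).trans ht
  have htexp : 2 * S₀ * Real.exp (M / (K * c₀ ^ (1 + η))) ≤ t := (le_max_right _ _).trans ht
  have ht0 : (0:ℝ) < t := by linarith
  rw [hmild t ht0 x]
  refine le_trans ?_ le_add_self
  have hcomm : (∫⁻ s in Set.Ioo (0 : ℝ) t,
        ∫⁻ y, ENNReal.ofReal (G (t - s) (x - y)) * (V s y) ^ (1 + η))
      = ∫⁻ s in Set.Ioo (0 : ℝ) t,
        ∫⁻ y, (V s y) ^ (1 + η) * ENNReal.ofReal (G (t - s) (x - y)) :=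
    lintegral_congr fun s => lintegral_congr fun y => mul_comm _ _
  rw [hcomm]
  have hsub : (volume : Measure ℝ).restrict (Set.Ioo S₀ (t/2))
      ≤ (volume : Measure ℝ).restrict (Set.Ioo (0 : ℝ) t) := by
    apply Measure.restrict_mono _ le_rfl
    apply Set.Ioo_subset_Ioo <;> linarith
  refine le_trans ?_ (lintegral_mono' hsub le_rfl)
  have hce := coreEst d hd α β η hα hβ hη hηc G c₁ hc₁ hGlower V c₀ S₀ hc₀ hS₀
    hyp₀ t S₀ (t/2) le_rfl (by linarith) le_rfl x hx
  refine le_trans (ENNReal.ofReal_le_ofReal ?_) hce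
  have hexp0 : (0:ℝ) < Real.exp (M / (K * c₀ ^ (1 + η))) := Real.exp_pos _
  have hlog : M / (K * c₀ ^ (1 + η)) ≤ Real.log (t / 2 / S₀) := by
    rw [← Real.log_exp (M / (K * c₀ ^ (1 + η)))]
    apply Real.log_le_log hexp0
    rw [le_div_iff₀ (by linarith : (0:ℝ) < S₀)]
    linarith
  have htp : 0 < t ^ (-(β * (d:ℝ)) / α) := Real.rpow_pos_of_pos ht0 _
  calc M * t ^ (-(β * (d:ℝ)) / α)
      = (K * c₀ ^ (1 + η) * (M / (K * c₀ ^ (1 + η)))) * t ^ (-(β * (d:ℝ)) / α) := by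
        field_simp
    _ ≤ (K * c₀ ^ (1 + η) * Real.log (t / 2 / S₀)) * t ^ (-(β * (d:ℝ)) / α) := by
        apply mul_le_mul_of_nonneg_right _ htp.le
        exact mul_le_mul_of_nonneg_left hlog hKc.le
    _ = K * c₀ ^ (1 + η) * t ^ (-(β * (d:ℝ)) / α) * Real.log (t / 2 / S₀) := by ring


lemma exists_scale (S T : ℝ) (hS : 0 < S) (n₀ : ℕ) (h₀ : (4:ℝ) ^ (n₀+1) * S ≤ T) :
    ∃ n : ℕ, n₀ ≤ n ∧ (4:ℝ) ^ (n+1) * S ≤ T ∧ T < (4:ℝ) ^ (n+2) * S := by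
  classical
  have hQex : ∃ k : ℕ, T < (4:ℝ) ^ (k+1) * S := by
    obtain ⟨N, hN⟩ := pow_unbounded_of_one_lt (T / S) (by norm_num : (1:ℝ) < 4)
    refine ⟨N, ?_⟩
    rw [div_lt_iff₀ hS] at hN
    have h1 : (4:ℝ) ^ N ≤ 4 ^ (N+1) := pow_le_pow_right₀ (by norm_num) (Nat.le_succ N)
    have h2 : (4:ℝ) ^ N * S ≤ 4 ^ (N+1) * S := mul_le_mul_of_nonneg_right h1 hS.le
    linarith
  set k := Nat.find hQex with hkdef
  have hk : T < (4:ℝ) ^ (k+1) * S := Nat.find_spec hQex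
  have hkn : n₀ < k := by
    by_contra hc
    push_neg at hc
    have h1 : (4:ℝ) ^ (k+1) ≤ 4 ^ (n₀+1) := pow_le_pow_right₀ (by norm_num) (by omega)
    have h2 : (4:ℝ) ^ (k+1) * S ≤ 4 ^ (n₀+1) * S := mul_le_mul_of_nonneg_right h1 hS.le
    linarith
  refine ⟨k - 1, by omega, ?_, ?_⟩
  · have hmin : ¬ (T < (4:ℝ) ^ ((k-1)+1) * S) := Nat.find_min hQex (by omega)
    linarith [not_lt.1 hmin]
  · have he : (k-1)+2 = k+1 := by omega
    rw [he]
    exact hk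

end NLTLB


set_option maxHeartbeats 2000000 in
/-- Proposition 3.2. For `0 < η ≤ α/(βd)`, a mild solution with
non-trivial nonnegative initial data satisfies
`∫₀^T ∫ V(s,y)^{1+η} G(T+t-s, x-y) dy ds ≳ T` for large `T`, `0 < t < T/3`
and `|x| ≤ T^{β/α}`. -/
theorem nonlinear_term_lower_bound
    (d : ℕ) (hd : 1 ≤ d) (α β η : ℝ)
    (hα : α ∈ Set.Ioo (0 : ℝ) 2) (hβ : β ∈ Set.Ioo (0 : ℝ) 1)
    (hη : 0 < η) (hηc : η ≤ α / (β * d))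
    (G : ℝ → EuclideanSpace ℝ (Fin d) → ℝ)
    (hGmeas : Measurable (Function.uncurry G))
    (hGnonneg : ∀ t x, 0 ≤ G t x)
    (c₁ : ℝ) (hc₁ : 0 < c₁)
    (hGlower : ∀ t : ℝ, 0 < t → ∀ x : EuclideanSpace ℝ (Fin d),
      c₁ * min (t ^ (-(β * d) / α)) (t ^ β / ‖x‖ ^ ((d : ℝ) + α)) ≤ G t x)
    (V₀ : EuclideanSpace ℝ (Fin d) → ℝ)
    (hV₀meas : Measurable V₀) (hV₀nonneg : ∀ x, 0 ≤ V₀ x)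
    (hV₀ne : ¬ (V₀ =ᵐ[volume] 0))
    (V : ℝ → EuclideanSpace ℝ (Fin d) → ℝ≥0∞)
    (hVmeas : Measurable (Function.uncurry V))
    (hmild : ∀ t : ℝ, 0 < t → ∀ x : EuclideanSpace ℝ (Fin d),
      V t x
        = (∫⁻ y, ENNReal.ofReal (G t (x - y)) * ENNReal.ofReal (V₀ y))
          + ∫⁻ s in Set.Ioo (0 : ℝ) t,
              ∫⁻ y, ENNReal.ofReal (G (t - s) (x - y)) * (V s y) ^ (1 + η)) :
    ∃ C : ℝ, 0 < C ∧ ∃ T₁ : ℝ, 0 < T₁ ∧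
      ∀ T : ℝ, T₁ ≤ T → ∀ t : ℝ, 0 < t → t < T / 3 →
        ∀ x : EuclideanSpace ℝ (Fin d), ‖x‖ ≤ T ^ (β / α) →
          ENNReal.ofReal (C * T)
            ≤ ∫⁻ s in Set.Ioo (0 : ℝ) T,
                ∫⁻ y, (V s y) ^ (1 + η) * ENNReal.ofReal (G (T + t - s) (x - y)) := by
  classical
  obtain ⟨hα0, hα2⟩ := hα
  obtain ⟨hβ0, hβ1⟩ := hβ
  have hd0 : (0:ℝ) < d := by exact_mod_cast hd
  set p : ℝ := β * (d:ℝ) / α with hpdef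
  have hp : 0 < p := by positivity
  set K : ℝ := c₁ * 2 ^ (-(β + d + α))
      * (volume (ball (0 : EuclideanSpace ℝ (Fin d)) 1)).toReal with hKdef
  have hK : 0 < K := by
    have h1 := Real.rpow_pos_of_pos (show (0:ℝ) < 2 by norm_num) (-(β + d + α))
    have h2 : 0 < (volume (ball (0 : EuclideanSpace ℝ (Fin d)) 1)).toReal := by
      haveI : Nontrivial (EuclideanSpace ℝ (Fin d)) :=
        ⟨0, EuclideanSpace.single ⟨0, hd⟩ 1, by
          intro h; have := congrArg (fun v : EuclideanSpace ℝ (Fin d) => v ⟨0, hd⟩) h; simp [EuclideanSpace.single] at this⟩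
      exact ENNReal.toReal_pos (measure_ball_pos _ _ one_pos).ne' measure_ball_lt_top.ne
    rw [hKdef]; positivity
  have hlog2 : 0 < Real.log 2 := Real.log_pos (by norm_num)
  set K' : ℝ := K * Real.log 2 with hK'def
  have hK' : 0 < K' := by positivity
  set Qn : ℕ := ⌈2 + p⌉₊ with hQdef
  have hQge : 2 + p ≤ (Qn:ℝ) := Nat.le_ceil _
  have hQn1 : 0 < Qn := Nat.ceil_pos.2 (by linarith)
  set D : ℝ := 4 ^ (2 * Qn) with hDdef
  have hD1 : (1:ℝ) ≤ D := one_le_pow₀ (by norm_num)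
  have hDpos : (0:ℝ) < D := by positivity
  set B : ℝ := max 1 ((D / K') ^ (1/η)) with hBdef
  have hB1 : (1:ℝ) ≤ B := le_max_left _ _
  have hB0 : (0:ℝ) < B := by linarith
  have hKB : D ≤ K' * B ^ η := by
    have h1 : (D / K') ^ (1/η) ≤ B := le_max_right _ _
    have h2 : ((D / K') ^ (1/η)) ^ η ≤ B ^ η :=
      Real.rpow_le_rpow (Real.rpow_nonneg (by positivity) _) h1 hη.le
    rw [← Real.rpow_mul (by positivity : (0:ℝ) ≤ D / K'), one_div,
      inv_mul_cancel₀ hη.ne', Real.rpow_one] at h2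
    calc D = K' * (D / K') := by field_simp
      _ ≤ K' * B ^ η := mul_le_mul_of_nonneg_left h2 hK'.le
  obtain ⟨S_B, hSB1, hypB⟩ := NLTLB.kick d hd α β η ⟨hα0, hα2⟩ ⟨hβ0, hβ1⟩ hη hηc G c₁ hc₁
    hGlower V₀ hV₀meas hV₀nonneg hV₀ne V hmild B hB0
  have hSB0 : (0:ℝ) < S_B := by linarith
  -- the iteration
  have ind : ∀ n : ℕ, NLTLB.Hyp d α β V (B * D ^ n) ((4:ℝ) ^ n * S_B) := by
    intro n
    induction n with
    | zero => simpa using hypB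
    | succ n ih =>
      have hDn1 : (1:ℝ) ≤ D ^ n := one_le_pow₀ hD1
      have h4n1 : (1:ℝ) ≤ (4:ℝ) ^ n := one_le_pow₀ (by norm_num)
      have hthr1 : (1:ℝ) ≤ (4:ℝ) ^ n * S_B := by
        calc (1:ℝ) = 1 * 1 := by ring
          _ ≤ (4:ℝ) ^ n * S_B := mul_le_mul h4n1 hSB1 zero_le_one (by positivity)
      have hst := NLTLB.step d hd α β η ⟨hα0, hα2⟩ ⟨hβ0, hβ1⟩ hη hηc G c₁ hc₁ hGlower V₀ V
        hmild (B * D ^ n) ((4:ℝ) ^ n * S_B) (by positivity) hthr1 ih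
      rw [show (4:ℝ) ^ (n+1) * S_B = 4 * ((4:ℝ) ^ n * S_B) by ring]
      refine NLTLB.hyp_mono (by linarith) ?_ hst
      have hg1 : (1:ℝ) ≤ B * D ^ n := by
        calc (1:ℝ) = 1 * 1 := by ring
          _ ≤ B * D ^ n := mul_le_mul hB1 hDn1 zero_le_one (by positivity)
      have hgpow : (B * D ^ n) ^ (1+η) = (B * D ^ n) * (B * D ^ n) ^ η := by
        rw [Real.rpow_add (by positivity) 1 η, Real.rpow_one]
      have hBle : B ^ η ≤ (B * D ^ n) ^ η :=
        Real.rpow_le_rpow hB0.le (le_mul_of_one_le_right hB0.le hDn1) hη.le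
      calc B * D ^ (n+1) = D * (B * D ^ n) := by ring
        _ ≤ (K' * B ^ η) * (B * D ^ n) := mul_le_mul_of_nonneg_right hKB (by positivity)
        _ ≤ (K' * (B * D ^ n) ^ η) * (B * D ^ n) := by
            apply mul_le_mul_of_nonneg_right _ (by positivity)
            exact mul_le_mul_of_nonneg_left hBle hK'.le
        _ = (c₁ * 2 ^ (-(β + d + α))
              * (volume (ball (0 : EuclideanSpace ℝ (Fin d)) 1)).toReal)
            * Real.log 2 * (B * D ^ n) ^ (1 + η) := by
            rw [hgpow, hK'def, hKdef]; ring
  -- threshold index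
  have h41 : (1:ℝ) < 4 ^ Qn := one_lt_pow₀ (by norm_num) hQn1.ne'
  obtain ⟨n₀, hn₀⟩ := pow_unbounded_of_one_lt ((4:ℝ) ^ (2 * Qn) * S_B ^ Qn) h41
  have hinv : ∀ n : ℕ, n₀ ≤ n → (4:ℝ) ^ (2 * Qn) * S_B ^ Qn ≤ ((4:ℝ) ^ Qn) ^ n :=
    fun n hn => hn₀.le.trans (pow_le_pow_right₀ h41.le hn)
  refine ⟨K', hK', max ((4:ℝ) ^ (n₀+1) * S_B) (2 ^ p), ?_, ?_⟩
  · have : (0:ℝ) < (4:ℝ) ^ (n₀+1) * S_B := mul_pos (by positivity) hSB0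
    exact lt_of_lt_of_le this (le_max_left _ _)
  intro T hT t htpos ht3 x hx
  have hT4 : (4:ℝ) ^ (n₀+1) * S_B ≤ T := (le_max_left _ _).trans hT
  have hT2p : (2:ℝ) ^ p ≤ T := (le_max_right _ _).trans hT
  have h4n₀ : (4:ℝ) ≤ (4:ℝ) ^ (n₀+1) := by
    calc (4:ℝ) = 4 ^ 1 := (pow_one 4).symm
      _ ≤ 4 ^ (n₀+1) := pow_le_pow_right₀ (by norm_num) (by omega)
  have hT1 : (1:ℝ) ≤ T := by
    have h42 : (4:ℝ) * 1 ≤ (4:ℝ) ^ (n₀+1) * S_B :=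
      mul_le_mul h4n₀ hSB1 zero_le_one (by positivity)
    linarith
  have hT0 : (0:ℝ) < T := by linarith
  obtain ⟨n, hn₀n, hPn, hPn1⟩ := NLTLB.exists_scale S_B T hSB0 n₀ hT4
  -- apply the core estimate
  have h4n1 : (1:ℝ) ≤ (4:ℝ) ^ n := one_le_pow₀ (by norm_num)
  have hDn1 : (1:ℝ) ≤ D ^ n := one_le_pow₀ hD1
  have hS1 : (1:ℝ) ≤ (4:ℝ) ^ n * S_B := by
    calc (1:ℝ) = 1 * 1 := by ring
      _ ≤ (4:ℝ) ^ n * S_B := mul_le_mul h4n1 hSB1 zero_le_one (by positivity)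
  have hu : (4:ℝ) ^ n * S_B ≤ T / 4 := by
    have e : (4:ℝ) ^ (n+1) = 4 * 4 ^ n := by ring
    rw [e] at hPn
    linarith [hPn]
  have hx' : ‖x‖ ≤ (T + t) ^ (β / α) :=
    hx.trans (Real.rpow_le_rpow hT0.le (by linarith) (by positivity))
  have hce := NLTLB.coreEst d hd α β η ⟨hα0, hα2⟩ ⟨hβ0, hβ1⟩ hη hηc G c₁ hc₁ hGlower V
    (B * D ^ n) ((4:ℝ) ^ n * S_B) (by positivity) hS1 (ind n)
    (T + t) (T / 4) (T / 2) hu (by linarith) (by linarith) x hx'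
  have hsub : (volume : Measure ℝ).restrict (Set.Ioo (T/4) (T/2))
      ≤ (volume : Measure ℝ).restrict (Set.Ioo (0 : ℝ) T) := by
    apply Measure.restrict_mono _ le_rfl
    apply Set.Ioo_subset_Ioo <;> linarith
  refine le_trans (ENNReal.ofReal_le_ofReal ?_) (hce.trans (lintegral_mono' hsub le_rfl))
  -- the final real inequality
  set γ : ℝ := B * D ^ n with hγdef
  have hγ0 : (0:ℝ) < γ := by positivity
  have hγ1 : (1:ℝ) ≤ γ := by
    rw [hγdef]
    calc (1:ℝ) = 1 * 1 := by ring
      _ ≤ B * D ^ n := mul_le_mul hB1 hDn1 zero_le_one (by positivity)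
  have hlogeq : Real.log (T / 2 / (T / 4)) = Real.log 2 := by
    congr 1
    field_simp
    ring
  have hγT : (T:ℝ) ^ (Qn:ℕ) ≤ γ := by
    have c1 : T ^ Qn ≤ ((4:ℝ) ^ (n+2) * S_B) ^ Qn := pow_le_pow_left₀ hT0.le hPn1.le Qn
    have c2 : ((4:ℝ) ^ (n+2) * S_B) ^ Qn = 4 ^ (n*Qn) * ((4:ℝ) ^ (2*Qn) * S_B ^ Qn) := by
      rw [mul_pow, ← pow_mul, show (n+2)*Qn = n*Qn + 2*Qn by ring, pow_add]
      ring
    have c3 : (4:ℝ) ^ (n*Qn) * ((4:ℝ) ^ (2*Qn) * S_B ^ Qn)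
        ≤ 4 ^ (n*Qn) * 4 ^ (n*Qn) := by
      have := hinv n hn₀n
      rw [← pow_mul, Nat.mul_comm Qn n] at this
      exact mul_le_mul_of_nonneg_left this (by positivity)
    have c4 : (4:ℝ) ^ (n*Qn) * 4 ^ (n*Qn) ≤ γ := by
      have e : D ^ n = (4:ℝ) ^ (n*Qn) * 4 ^ (n*Qn) := by
        rw [hDdef, ← pow_mul, ← pow_add]
        congr 1
        ring
      rw [hγdef, e]
      exact le_mul_of_one_le_left (by positivity) hB1
    linarith
  have hγη : γ ≤ γ ^ (1+η) := by
    nth_rewrite 1 [← Real.rpow_one γ]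
    exact Real.rpow_le_rpow_of_exponent_le hγ1 (by linarith)
  have hTQ : T ^ (2+p) ≤ T ^ (Qn:ℕ) := by
    rw [← Real.rpow_natCast T Qn]
    exact Real.rpow_le_rpow_of_exponent_le hT1 hQge
  have hTp0 : (0:ℝ) < T ^ p := Real.rpow_pos_of_pos hT0 p
  have h2p0 : (0:ℝ) < (2:ℝ) ^ p := Real.rpow_pos_of_pos (by norm_num) p
  have hT2p' : T * ((2:ℝ) ^ p * T ^ p) ≤ T ^ (2+p) := by
    have e : T ^ ((2:ℝ)+p) = T * T * T ^ p := by
      rw [show (2:ℝ)+p = 1 + 1 + p by ring, Real.rpow_add hT0, Real.rpow_add hT0,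
        Real.rpow_one]
    calc T * ((2:ℝ) ^ p * T ^ p) = (2:ℝ) ^ p * (T * T ^ p) := by ring
      _ ≤ T * (T * T ^ p) := mul_le_mul_of_nonneg_right hT2p (by positivity)
      _ = T ^ ((2:ℝ)+p) := by rw [e]; ring
  have htt : ((2:ℝ) ^ p * T ^ p)⁻¹ ≤ (T + t) ^ (-(β * (d:ℝ)) / α) := by
    have hexp : -(β * (d:ℝ)) / α = -p := by rw [hpdef]; ring
    rw [hexp, Real.rpow_neg (by linarith)]
    have h2T : (T+t) ^ p ≤ ((2:ℝ)*T) ^ p := Real.rpow_le_rpow (by linarith) (by linarith) hp.le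
    rw [Real.mul_rpow (by norm_num) hT0.le] at h2T
    exact inv_anti₀ (Real.rpow_pos_of_pos (by linarith) p) h2T
  have hfinal : T ≤ γ ^ (1+η) * (T + t) ^ (-(β * (d:ℝ)) / α) := by
    have h1 : T * ((2:ℝ) ^ p * T ^ p) ≤ γ ^ (1+η) :=
      hT2p'.trans (hTQ.trans (hγT.trans hγη))
    calc T = (T * ((2:ℝ) ^ p * T ^ p)) * ((2:ℝ) ^ p * T ^ p)⁻¹ := by field_simp
      _ ≤ γ ^ (1+η) * ((2:ℝ) ^ p * T ^ p)⁻¹ :=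
          mul_le_mul_of_nonneg_right h1 (by positivity)
      _ ≤ γ ^ (1+η) * (T + t) ^ (-(β * (d:ℝ)) / α) :=
          mul_le_mul_of_nonneg_left htt (by positivity)
  rw [hlogeq]
  calc K' * T = (K * Real.log 2) * T := by rw [hK'def]
    _ ≤ (K * Real.log 2) * (γ ^ (1+η) * (T + t) ^ (-(β * (d:ℝ)) / α)) :=
        mul_le_mul_of_nonneg_left hfinal (by positivity)
    _ = (c₁ * 2 ^ (-(β + d + α))
          * (volume (ball (0 : EuclideanSpace ℝ (Fin d)) 1)).toReal)
        * γ ^ (1 + η) * (T + t) ^ (-(β * (d:ℝ)) / α) * Real.log 2 := by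
        rw [hKdef]; ring
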